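/- Let X₁, X₂ be real Banach spaces and X = X₁ × X₂ with norm ‖(x,y)‖ = (‖x‖² + ‖y‖²)^{1/2}. Let A₁ : X₁ → X₁ and A₂ : X₂ → X₂ be bounded linear operators with ‖exp(−sA_j)‖ ≤ 1 for all s ≥ 0 (j = 1,2), and let B₁ : X₂ → X₁, B₂ : X₁ → X₂ be bounded linear operators. Define E_j(τ) = exp(−τA_j), X_j(τ) = (∫₀^τ exp(−σA_j) dσ) ∘ B_j, the split-step operators T₁(τ)(x,y) = (E₁(τ)x + X₁(τ)y, y), T₂(τ)(x,y) = (x, X₂(τ)x + E₂(τ)y), and T(τ) = T₂(τ) ∘ T₁(τ). Then for all t ≥ 0 and all n ∈ ℕ with n ≥ 1, the n-th power satisfies the stability estimate ‖T(t/n)^n‖ ≤ exp(t(‖B₁‖ + ‖B₂‖)). -/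

import Mathlib

noncomputable section

open scoped Topology

variable {X₁ X₂ : Type*} [NormedAddCommGroup X₁] [NormedSpace ℝ X₁] [CompleteSpace X₁]
  [NormedAddCommGroup X₂] [NormedSpace ℝ X₂] [CompleteSpace X₂]

/-- The operator exponential `exp (-τ A)` of a bounded operator `A`. -/
def expOp {X : Type*} [NormedAddCommGroup X] [NormedSpace ℝ X] [CompleteSpace X]
    (A : X →L[ℝ] X) (τ : ℝ) : X →L[ℝ] X :=
  NormedSpace.exp (-(τ • A))

/-- The coupling operator `X(τ) = (∫₀^τ exp(-σ A) dσ) ∘ B`. -/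
def Xop {X Y : Type*} [NormedAddCommGroup X] [NormedSpace ℝ X] [CompleteSpace X]
    [NormedAddCommGroup Y] [NormedSpace ℝ Y] (A : X →L[ℝ] X) (B : Y →L[ℝ] X) (τ : ℝ) :
    Y →L[ℝ] X :=
  (∫ σ in (0:ℝ)..τ, expOp A σ).comp B

/-- Lift of a block operator on `X₁ × X₂` to the `ℓ²`-product space
`X = X₁ × X₂` with norm `‖(x,y)‖ = (‖x‖² + ‖y‖²)^(1/2)`. -/
def toL2 (M : (X₁ × X₂) →L[ℝ] (X₁ × X₂)) :
    WithLp 2 (X₁ × X₂) →L[ℝ] WithLp 2 (X₁ × X₂) :=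
  ((WithLp.prodContinuousLinearEquiv 2 ℝ X₁ X₂).symm.toContinuousLinearMap.comp M).comp
    (WithLp.prodContinuousLinearEquiv 2 ℝ X₁ X₂).toContinuousLinearMap

/-- The split-step operator `T₁(τ)(x,y) = (exp(-τA₁)x + X₁(τ)y, y)`. -/
def T1 (A₁ : X₁ →L[ℝ] X₁) (B₁ : X₂ →L[ℝ] X₁) (τ : ℝ) :
    WithLp 2 (X₁ × X₂) →L[ℝ] WithLp 2 (X₁ × X₂) :=
  toL2 (((expOp A₁ τ).coprod (Xop A₁ B₁ τ)).prod (ContinuousLinearMap.snd ℝ X₁ X₂))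

/-- The split-step operator `T₂(τ)(x,y) = (x, X₂(τ)x + exp(-τA₂)y)`. -/
def T2 (A₂ : X₂ →L[ℝ] X₂) (B₂ : X₁ →L[ℝ] X₂) (τ : ℝ) :
    WithLp 2 (X₁ × X₂) →L[ℝ] WithLp 2 (X₁ × X₂) :=
  toL2 ((ContinuousLinearMap.fst ℝ X₁ X₂).prod ((Xop A₂ B₂ τ).coprod (expOp A₂ τ)))

/-- The split-step approximation operator `T(τ) = T₂(τ) ∘ T₁(τ)`. -/
def Tfull (A₁ : X₁ →L[ℝ] X₁) (A₂ : X₂ →L[ℝ] X₂) (B₁ : X₂ →L[ℝ] X₁) (B₂ : X₁ →L[ℝ] X₂)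
    (τ : ℝ) : WithLp 2 (X₁ × X₂) →L[ℝ] WithLp 2 (X₁ × X₂) :=
  (T2 A₂ B₂ τ).comp (T1 A₁ B₁ τ)

/-- The full operator `𝓒(x,y) = (A₁x - B₁y, A₂y - B₂x)`. -/
def opC (A₁ : X₁ →L[ℝ] X₁) (A₂ : X₂ →L[ℝ] X₂) (B₁ : X₂ →L[ℝ] X₁) (B₂ : X₁ →L[ℝ] X₂) :
    WithLp 2 (X₁ × X₂) →L[ℝ] WithLp 2 (X₁ × X₂) :=
  toL2 ((A₁.coprod (-B₁)).prod ((-B₂).coprod A₂))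

/-- The diagonal operator `𝓐(x,y) = (A₁x, A₂y)`. -/
def opA (A₁ : X₁ →L[ℝ] X₁) (A₂ : X₂ →L[ℝ] X₂) :
    WithLp 2 (X₁ × X₂) →L[ℝ] WithLp 2 (X₁ × X₂) :=
  toL2 (A₁.prodMap A₂)

/-- The off-diagonal coupling operator `𝓑(x,y) = (B₁y, B₂x)`. -/
def opB (B₁ : X₂ →L[ℝ] X₁) (B₂ : X₁ →L[ℝ] X₂) :
    WithLp 2 (X₁ × X₂) →L[ℝ] WithLp 2 (X₁ × X₂) :=
  toL2 (((0 : X₁ →L[ℝ] X₁).coprod B₁).prod (B₂.coprod (0 : X₂ →L[ℝ] X₂)))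


lemma norm_Xop_le {X Y : Type*} [NormedAddCommGroup X] [NormedSpace ℝ X] [CompleteSpace X]
    [NormedAddCommGroup Y] [NormedSpace ℝ Y] (A : X →L[ℝ] X) (B : Y →L[ℝ] X) {τ : ℝ}
    (hτ : 0 ≤ τ) (hA : ∀ s : ℝ, 0 ≤ s → ‖expOp A s‖ ≤ 1) : ‖Xop A B τ‖ ≤ τ * ‖B‖ := by
  have h1 : ‖∫ σ in (0:ℝ)..τ, expOp A σ‖ ≤ 1 * |τ - 0| := by
    apply intervalIntegral.norm_integral_le_of_norm_le_const
    intro s hs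
    rw [Set.uIoc_of_le hτ] at hs
    exact hA s hs.1.le
  calc ‖Xop A B τ‖ ≤ ‖∫ σ in (0:ℝ)..τ, expOp A σ‖ * ‖B‖ := ContinuousLinearMap.opNorm_comp_le _ _
    _ ≤ τ * ‖B‖ := by
        apply mul_le_mul_of_nonneg_right _ (norm_nonneg B)
        rwa [sub_zero, abs_of_nonneg hτ, one_mul] at h1

lemma sq_ineq {a b c u : ℝ} (ha : 0 ≤ a) (hb : 0 ≤ b) (hc : 0 ≤ c) (hu : 0 ≤ u)
    (h : u ≤ a + c * b) : u ^ 2 + b ^ 2 ≤ (1 + c) ^ 2 * (a ^ 2 + b ^ 2) := by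
  nlinarith [sq_nonneg (a - b), mul_nonneg hc (sq_nonneg (a - b)), sq_nonneg c,
    mul_nonneg (mul_nonneg hc hc) (sq_nonneg b)]

lemma norm_T1_le (A₁ : X₁ →L[ℝ] X₁) (B₁ : X₂ →L[ℝ] X₁) {τ : ℝ} (hτ : 0 ≤ τ)
    (hA₁ : ∀ s : ℝ, 0 ≤ s → ‖expOp A₁ s‖ ≤ 1) : ‖T1 A₁ B₁ τ‖ ≤ 1 + τ * ‖B₁‖ := by
  have hc : (0:ℝ) ≤ τ * ‖B₁‖ := mul_nonneg hτ (norm_nonneg _)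
  apply ContinuousLinearMap.opNorm_le_bound _ (by linarith)
  intro z
  set x := (WithLp.equiv 2 (X₁ × X₂) z).1 with hx
  set y := (WithLp.equiv 2 (X₁ × X₂) z).2 with hy
  have hfst : (T1 A₁ B₁ τ z).fst = expOp A₁ τ x + Xop A₁ B₁ τ y := rfl
  have hsnd : (T1 A₁ B₁ τ z).snd = y := rfl
  have hbound : ‖expOp A₁ τ x + Xop A₁ B₁ τ y‖ ≤ ‖x‖ + (τ * ‖B₁‖) * ‖y‖ := by
    calc ‖expOp A₁ τ x + Xop A₁ B₁ τ y‖ ≤ ‖expOp A₁ τ x‖ + ‖Xop A₁ B₁ τ y‖ := norm_add_le _ _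
      _ ≤ ‖x‖ + (τ * ‖B₁‖) * ‖y‖ := by
          gcongr
          · calc ‖expOp A₁ τ x‖ ≤ ‖expOp A₁ τ‖ * ‖x‖ := (expOp A₁ τ).le_opNorm x
              _ ≤ 1 * ‖x‖ := by gcongr; exact hA₁ τ hτ
              _ = ‖x‖ := one_mul _
          · calc ‖Xop A₁ B₁ τ y‖ ≤ ‖Xop A₁ B₁ τ‖ * ‖y‖ := (Xop A₁ B₁ τ).le_opNorm y
              _ ≤ (τ * ‖B₁‖) * ‖y‖ := by gcongr; exact norm_Xop_le A₁ B₁ hτ hA₁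
  have hsq : ‖T1 A₁ B₁ τ z‖ ^ 2 ≤ ((1 + τ * ‖B₁‖) * ‖z‖) ^ 2 := by
    rw [WithLp.prod_norm_sq_eq_of_L2, hfst, hsnd, mul_pow,
      WithLp.prod_norm_sq_eq_of_L2 z]
    have hzx : z.fst = x := rfl
    have hzy : z.snd = y := rfl
    rw [hzx, hzy]
    exact sq_ineq (norm_nonneg x) (norm_nonneg y) hc (norm_nonneg _) hbound
  exact le_of_pow_le_pow_left₀ two_ne_zero
    (mul_nonneg (by linarith) (norm_nonneg z)) hsq

lemma norm_T2_le (A₂ : X₂ →L[ℝ] X₂) (B₂ : X₁ →L[ℝ] X₂) {τ : ℝ} (hτ : 0 ≤ τ)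
    (hA₂ : ∀ s : ℝ, 0 ≤ s → ‖expOp A₂ s‖ ≤ 1) : ‖T2 A₂ B₂ τ‖ ≤ 1 + τ * ‖B₂‖ := by
  have hc : (0:ℝ) ≤ τ * ‖B₂‖ := mul_nonneg hτ (norm_nonneg _)
  apply ContinuousLinearMap.opNorm_le_bound _ (by linarith)
  intro z
  set x := (WithLp.equiv 2 (X₁ × X₂) z).1 with hx
  set y := (WithLp.equiv 2 (X₁ × X₂) z).2 with hy
  have hfst : (T2 A₂ B₂ τ z).fst = x := rfl
  have hsnd : (T2 A₂ B₂ τ z).snd = Xop A₂ B₂ τ x + expOp A₂ τ y := rfl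
  have hbound : ‖Xop A₂ B₂ τ x + expOp A₂ τ y‖ ≤ ‖y‖ + (τ * ‖B₂‖) * ‖x‖ := by
    calc ‖Xop A₂ B₂ τ x + expOp A₂ τ y‖ ≤ ‖Xop A₂ B₂ τ x‖ + ‖expOp A₂ τ y‖ := norm_add_le _ _
      _ ≤ (τ * ‖B₂‖) * ‖x‖ + ‖y‖ := by
          gcongr
          · calc ‖Xop A₂ B₂ τ x‖ ≤ ‖Xop A₂ B₂ τ‖ * ‖x‖ := (Xop A₂ B₂ τ).le_opNorm x
              _ ≤ (τ * ‖B₂‖) * ‖x‖ := by gcongr; exact norm_Xop_le A₂ B₂ hτ hA₂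
          · calc ‖expOp A₂ τ y‖ ≤ ‖expOp A₂ τ‖ * ‖y‖ := (expOp A₂ τ).le_opNorm y
              _ ≤ 1 * ‖y‖ := by gcongr; exact hA₂ τ hτ
              _ = ‖y‖ := one_mul _
      _ = ‖y‖ + (τ * ‖B₂‖) * ‖x‖ := by ring
  have hsq : ‖T2 A₂ B₂ τ z‖ ^ 2 ≤ ((1 + τ * ‖B₂‖) * ‖z‖) ^ 2 := by
    rw [WithLp.prod_norm_sq_eq_of_L2, hfst, hsnd, mul_pow,
      WithLp.prod_norm_sq_eq_of_L2 z]
    have hzx : z.fst = x := rfl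
    have hzy : z.snd = y := rfl
    rw [hzx, hzy]
    have := sq_ineq (norm_nonneg y) (norm_nonneg x) hc (norm_nonneg _) hbound
    linarith
  exact le_of_pow_le_pow_left₀ two_ne_zero
    (mul_nonneg (by linarith) (norm_nonneg z)) hsq

/-- Stability of the split-step approximation: `‖T(t/n)ⁿ‖ ≤ exp(t(‖B₁‖ + ‖B₂‖))`. -/
theorem Tfull_pow_norm_le (A₁ : X₁ →L[ℝ] X₁) (A₂ : X₂ →L[ℝ] X₂)
    (B₁ : X₂ →L[ℝ] X₁) (B₂ : X₁ →L[ℝ] X₂)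
    (hA₁ : ∀ s : ℝ, 0 ≤ s → ‖expOp A₁ s‖ ≤ 1)
    (hA₂ : ∀ s : ℝ, 0 ≤ s → ‖expOp A₂ s‖ ≤ 1) :
    ∀ t : ℝ, 0 ≤ t → ∀ n : ℕ, 1 ≤ n →
      ‖(Tfull A₁ A₂ B₁ B₂ (t / n)) ^ n‖ ≤ Real.exp (t * (‖B₁‖ + ‖B₂‖)) := by
  intro t ht n hn
  have hnpos : (0:ℝ) < n := by exact_mod_cast hn
  set τ := t / n with hτdef
  have hτ : 0 ≤ τ := div_nonneg ht hnpos.le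
  have hT1 := norm_T1_le A₁ B₁ hτ hA₁
  have hT2 := norm_T2_le A₂ B₂ hτ hA₂
  have hT : ‖Tfull A₁ A₂ B₁ B₂ τ‖ ≤ Real.exp (τ * (‖B₁‖ + ‖B₂‖)) := by
    calc ‖Tfull A₁ A₂ B₁ B₂ τ‖ ≤ ‖T2 A₂ B₂ τ‖ * ‖T1 A₁ B₁ τ‖ :=
          ContinuousLinearMap.opNorm_comp_le _ _
      _ ≤ (1 + τ * ‖B₂‖) * (1 + τ * ‖B₁‖) := by
          apply mul_le_mul hT2 hT1 (norm_nonneg _)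
          have : (0:ℝ) ≤ τ * ‖B₂‖ := mul_nonneg hτ (norm_nonneg _)
          linarith
      _ ≤ Real.exp (τ * ‖B₂‖) * Real.exp (τ * ‖B₁‖) := by
          apply mul_le_mul (by rw [add_comm]; exact Real.add_one_le_exp _)
            (by rw [add_comm]; exact Real.add_one_le_exp _)
          · have : (0:ℝ) ≤ τ * ‖B₁‖ := mul_nonneg hτ (norm_nonneg _)
            linarith
          · positivity
      _ = Real.exp (τ * (‖B₁‖ + ‖B₂‖)) := by rw [← Real.exp_add]; ring_nf
  calc ‖(Tfull A₁ A₂ B₁ B₂ τ) ^ n‖ ≤ ‖Tfull A₁ A₂ B₁ B₂ τ‖ ^ n := norm_pow_le' _ (Nat.pos_of_ne_zero (by omega))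
    _ ≤ Real.exp (τ * (‖B₁‖ + ‖B₂‖)) ^ n := pow_le_pow_left₀ (norm_nonneg _) hT n
    _ = Real.exp (n * (τ * (‖B₁‖ + ‖B₂‖))) := (Real.exp_nat_mul _ n).symm
    _ = Real.exp (t * (‖B₁‖ + ‖B₂‖)) := by
        rw [hτdef]; congr 1; field_simp
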